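/- arXiv:1601.02123 — 2 statements merged into one kernel-verified Lean document; each statement's English description precedes it below -/
import Mathlib

section
/- Let r(k,k′) = 4·sin(πk)·sin(π(k−k′))·sin(π(2k−k′)), e₊(k) = (8/3)·sin⁴(πk) and e₋(k) = 2·sin²(2πk). Then for all k, k′ ∈ ℝ: (1/2)·(r(k, k−k′)² + r(k, k+k′)²) = (3/4)·(e₋(k)·e₊(k′) + e₊(k)·e₋(k′)), and both sides equal 8·sin²(πk)·sin²(πk′)·(1 − cos(2πk)·cos(2πk′)). -/
noncomputable section

open Real

/-- `r(k,k′) = 4·sin(πk)·sin(π(k−k′))·sin(π(2k−k′))`. -/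
def r (k k' : ℝ) : ℝ :=
  4 * Real.sin (π * k) * Real.sin (π * (k - k')) * Real.sin (π * (2 * k - k'))

/-- `e₊(k) = (8/3)·sin⁴(πk)`. -/
def ePlus (k : ℝ) : ℝ := (8 / 3) * Real.sin (π * k) ^ 4

/-- `e₋(k) = 2·sin²(2πk)`. -/
def eMinus (k : ℝ) : ℝ := 2 * Real.sin (2 * π * k) ^ 2

theorem scattering_kernel_identity (k k' : ℝ) :
    (1 / 2) * (r k (k - k') ^ 2 + r k (k + k') ^ 2)
      = (3 / 4) * (eMinus k * ePlus k' + ePlus k * eMinus k') ∧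
    (1 / 2) * (r k (k - k') ^ 2 + r k (k + k') ^ 2)
      = 8 * Real.sin (π * k) ^ 2 * Real.sin (π * k') ^ 2 *
          (1 - Real.cos (2 * π * k) * Real.cos (2 * π * k')) := by
  unfold r ePlus eMinus
  have h1 : π * (k - (k - k')) = π * k' := by ring
  have h2 : π * (2 * k - (k - k')) = π * k + π * k' := by ring
  have h3 : π * (k - (k + k')) = -(π * k') := by ring
  have h4 : π * (2 * k - (k + k')) = π * k - π * k' := by ring
  have h5 : 2 * π * k = 2 * (π * k) := by ring
  have h6 : 2 * π * k' = 2 * (π * k') := by ring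
  rw [h1, h2, h3, h4, h5, h6, Real.sin_add, Real.sin_sub, Real.sin_neg,
    Real.sin_two_mul, Real.sin_two_mul, Real.cos_two_mul, Real.cos_two_mul]
  have pa := Real.sin_sq_add_cos_sq (π * k)
  have pb := Real.sin_sq_add_cos_sq (π * k')
  refine ⟨by ring, ?_⟩
  linear_combination (16 * Real.sin (π*k)^2 * Real.sin (π*k')^2 * Real.cos (π*k')^2) * pa +
    (16 * Real.sin (π*k)^2 * Real.sin (π*k')^2 * Real.cos (π*k)^2) * pb
end
end

section
/- Let D₁, D₂ ∈ ℂ and D₊, b ∈ ℝ. Then the determinant of the 4×4 complex matrix with rows (D₁, D₊, b, 0), (D₊, D₂, 0, b), (b, 0, D₂*, D₊), (0, b, D₊, D₁*) equals |D₁·D₂* + D₊² − b²|² − 4·D₊²·(Re D₁)·(Re D₂). -/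
noncomputable section

open Matrix Complex

set_option maxHeartbeats 2000000 in
theorem det_block_four_by_four (D₁ D₂ : ℂ) (Dp b : ℝ) :
    (!![D₁, (Dp : ℂ), (b : ℂ), 0;
        (Dp : ℂ), D₂, 0, (b : ℂ);
        (b : ℂ), 0, (starRingEnd ℂ) D₂, (Dp : ℂ);
        0, (b : ℂ), (Dp : ℂ), (starRingEnd ℂ) D₁] : Matrix (Fin 4) (Fin 4) ℂ).det
      = ((‖D₁ * (starRingEnd ℂ) D₂ + (Dp : ℂ) ^ 2 - (b : ℂ) ^ 2‖) ^ 2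
          - 4 * Dp ^ 2 * D₁.re * D₂.re : ℝ) := by
  rw [Complex.sq_norm]
  simp only [Matrix.det_succ_row_zero, Fin.sum_univ_succ, Fin.sum_univ_zero,
    Matrix.submatrix_apply, Matrix.det_fin_one, Fin.val_zero, Fin.val_succ, pow_succ, pow_zero,
    Matrix.cons_val', Matrix.cons_val_zero, Matrix.cons_val_one, Matrix.head_cons,
    Matrix.head_fin_const, Fin.succAbove_zero, Matrix.submatrix_submatrix]
  norm_num [Fin.succAbove, Matrix.cons_val_succ, Fin.lt_def, Fin.ext_iff]
  apply Complex.ext <;>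
    simp [Complex.sq_norm, Complex.normSq_apply, Complex.ext_iff] <;>
    ring
end
end
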